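/- Let p, v ∈ ℝ³ with ‖p‖ > r > 0 and suppose v is tangent to the collision cone boundary, i.e., ⟪p, v⟫ + ‖v‖·√(‖p‖² − r²) = 0 and v ≠ 0. Then the minimum over t ≥ 0 of ‖p + t·v‖² equals exactly r². -/
import Mathlib


open scoped InnerProductSpace

theorem stmt19 (p v : EuclideanSpace ℝ (Fin 3)) (r : ℝ) (hr : 0 < r)
    (hpr : ‖p‖ > r) (hv : v ≠ 0)
    (htan : ⟪p, v⟫_ℝ + ‖v‖ * Real.sqrt (‖p‖ ^ 2 - r ^ 2) = 0) :
    IsLeast {s : ℝ | ∃ t : ℝ, 0 ≤ t ∧ s = ‖p + t • v‖ ^ 2} (r ^ 2) := by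
  have hvn : 0 < ‖v‖ := norm_pos_iff.mpr hv
  set d := Real.sqrt (‖p‖ ^ 2 - r ^ 2) with hd
  have hd2 : d ^ 2 = ‖p‖ ^ 2 - r ^ 2 := Real.sq_sqrt (by nlinarith)
  have hdnn : 0 ≤ d := Real.sqrt_nonneg _
  have hip : ⟪p, v⟫_ℝ = -(‖v‖ * d) := by linarith
  have hexp : ∀ t : ℝ, ‖p + t • v‖ ^ 2 = ‖p‖ ^ 2 + 2 * t * ⟪p, v⟫_ℝ + t ^ 2 * ‖v‖ ^ 2 := by
    intro t
    rw [norm_add_sq_real, inner_smul_right, norm_smul, Real.norm_eq_abs, mul_pow, sq_abs]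
    ring
  constructor
  · refine ⟨d / ‖v‖, div_nonneg hdnn hvn.le, ?_⟩
    rw [hexp, hip]
    field_simp
    nlinarith
  · rintro s ⟨t, ht, rfl⟩
    rw [hexp, hip]
    nlinarith [sq_nonneg (t * ‖v‖ - d)]
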